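/- arXiv:1405.1900 — 7 statements merged into one kernel-verified Lean document; each statement's English description precedes it below -/
import Mathlib

section
/- Let G be a finite abelian group with unit element e, and let x_g (g in G) be complex numbers. Then in the group algebra C[G], the product over all characters χ of G of the elements Σ_{g∈G} χ(g) x_g g equals Θ(G)·e, where Θ(G) = ∏_{χ∈Ĝ} Σ_{g∈G} χ(g) x_g is the group determinant of G. -/
open MonoidAlgebra

section Aux

variable (G : Type) [CommGroup G]

/-- The monoid hom `g ↦ ψ(g) • g` into the group algebra. -/
noncomputable def twistHom (ψ : G →* ℂ) : G →* MonoidAlgebra ℂ G where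
  toFun g := MonoidAlgebra.single g (ψ g)
  map_one' := by simp [MonoidAlgebra.one_def]
  map_mul' g h := by
    simp only [MonoidAlgebra.single_mul_single, map_mul]

/-- The twisting algebra endomorphism `single g c ↦ single g (c * ψ g)`. -/
noncomputable def twist (ψ : G →* ℂ) : MonoidAlgebra ℂ G →ₐ[ℂ] MonoidAlgebra ℂ G :=
  MonoidAlgebra.lift ℂ (MonoidAlgebra ℂ G) G (twistHom G ψ)

lemma twist_single (ψ : G →* ℂ) (g : G) (c : ℂ) :
    twist G ψ (MonoidAlgebra.single g c) = MonoidAlgebra.single g (c * ψ g) := by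
  rw [twist, MonoidAlgebra.lift_single, twistHom]
  simp [MonoidAlgebra.smul_single']

lemma twist_apply (ψ : G →* ℂ) (f : MonoidAlgebra ℂ G) (h : G) :
    (twist G ψ f).coeff h = f.coeff h * ψ h := by
  induction f using MonoidAlgebra.induction_linear with
  | zero => simp
  | add f g hf hg =>
      rw [map_add, MonoidAlgebra.coeff_add, Finsupp.add_apply, hf, hg, MonoidAlgebra.coeff_add, Finsupp.add_apply, add_mul]
  | single g c =>
      rw [twist_single]
      rcases eq_or_ne g h with rfl | hgh
      · simp [MonoidAlgebra.coeff_single, Finsupp.single_apply]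
      · simp [MonoidAlgebra.coeff_single, Finsupp.single_apply, hgh]

/-- Characters separate points of a finite abelian group over `ℂ`. -/
lemma exists_char_ne_one [Fintype G] {a : G} (ha : a ≠ 1) : ∃ ψ : G →* ℂ, ψ a ≠ 1 := by
  have h1 : NeZero ((Monoid.exponent G : ℂ)) :=
    ⟨Nat.cast_ne_zero.mpr Monoid.exponent_ne_zero_of_finite⟩
  obtain ⟨φ, hφ⟩ := CommGroup.exists_apply_ne_one_of_hasEnoughRootsOfUnity G ℂ ha
  refine ⟨(Units.coeHom ℂ).comp φ, fun h => hφ ?_⟩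
  ext
  simpa using h

/-- The augmentation map. -/
noncomputable def aug : MonoidAlgebra ℂ G →ₐ[ℂ] ℂ :=
  MonoidAlgebra.lift ℂ ℂ G 1

lemma aug_single (g : G) (c : ℂ) : aug G (MonoidAlgebra.single g c) = c := by
  rw [aug, MonoidAlgebra.lift_single]
  simp

end Aux

/-- Frobenius' factorization of the group determinant of a finite abelian group,
refined to an identity in the group algebra `ℂ[G]`:
`∏_χ (Σ_g χ(g) x_g g) = Θ(G) • e` where `Θ(G) = ∏_χ Σ_g χ(g) x_g`. -/
theorem group_determinant_group_algebra_abelian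
    (G : Type) [CommGroup G] [Fintype G] [Fintype (G →* ℂ)] (x : G → ℂ) :
    ∏ χ : G →* ℂ, (∑ g : G, (MonoidAlgebra.single g (χ g * x g) : MonoidAlgebra ℂ G)) =
      MonoidAlgebra.single (1 : G) (∏ χ : G →* ℂ, ∑ g : G, χ g * x g) := by
  classical
  set P : MonoidAlgebra ℂ G :=
    ∏ χ : G →* ℂ, (∑ g : G, (MonoidAlgebra.single g (χ g * x g) : MonoidAlgebra ℂ G)) with hP
  -- P is invariant under twisting by any character ψ
  have hinv : ∀ ψ : G →* ℂ, twist G ψ P = P := by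
    intro ψ
    -- inverse character
    set ψ' : G →* ℂ := ψ.comp (invMonoidHom : G →* G) with hψ'
    have hone : ψ * ψ' = 1 := by
      ext g
      simp only [hψ', MonoidHom.mul_apply, MonoidHom.comp_apply, invMonoidHom_apply,
        MonoidHom.one_apply, ← map_mul, mul_inv_cancel, map_one]
    have hPmap : twist G ψ P =
        ∏ χ : G →* ℂ,
          (∑ g : G, (MonoidAlgebra.single g ((χ * ψ) g * x g) : MonoidAlgebra ℂ G)) := by
      rw [hP, map_prod]
      refine Finset.prod_congr rfl fun χ _ => ?_
      rw [map_sum]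
      refine Finset.sum_congr rfl fun g _ => ?_
      rw [twist_single]
      congr 1
      simp only [MonoidHom.mul_apply]
      ring
    rw [hPmap, hP]
    let e : (G →* ℂ) ≃ (G →* ℂ) :=
      ⟨fun χ => χ * ψ, fun χ => χ * ψ',
        fun χ => by simp only [mul_assoc, hone, mul_one],
        fun χ => by simp only [mul_assoc, mul_comm ψ' ψ, hone, mul_one]⟩
    exact (Equiv.prod_comp e
      (fun χ => ∑ g : G, (MonoidAlgebra.single g (χ g * x g) : MonoidAlgebra ℂ G)))
  -- hence P vanishes off the identity
  have hvanish : ∀ h : G, h ≠ 1 → P.coeff h = 0 := by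
    intro h hh
    obtain ⟨ψ, hψ⟩ := exists_char_ne_one G hh
    have h1 : P.coeff h * ψ h = P.coeff h := by
      have := congrArg (fun f : MonoidAlgebra ℂ G => f.coeff h) (hinv ψ)
      simpa [twist_apply] using this
    have h2 : P.coeff h * (ψ h - 1) = 0 := by
      rw [mul_sub, h1, mul_one, sub_self]
    exact (mul_eq_zero.mp h2).resolve_right (sub_ne_zero.mpr hψ)
  -- so P is supported at 1
  have hsupp : P = MonoidAlgebra.single (1 : G) (P.coeff 1) := by
    ext h
    rcases eq_or_ne h 1 with rfl | hh
    · simp [MonoidAlgebra.coeff_single, Finsupp.single_apply]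
    · rw [hvanish h hh, MonoidAlgebra.coeff_single, Finsupp.single_apply, if_neg (fun e => hh e.symm)]
  -- compute the coefficient at 1 via the augmentation map
  have haug : aug G P = ∏ χ : G →* ℂ, ∑ g : G, χ g * x g := by
    rw [hP, map_prod]
    refine Finset.prod_congr rfl fun χ _ => ?_
    rw [map_sum]
    exact Finset.sum_congr rfl fun g _ => aug_single G g _
  have haug' : aug G P = P.coeff 1 := by
    rw [hsupp, aug_single]
    simp
  rw [hsupp, ← haug', haug]
end

section
/- Let G be D_m or Q_m, χ₁ the trivial degree-one character and χ₂ the degree-one character with χ₂(a)=1, χ₂(b)=−1. Then (Σ_{g∈G} χ₁(g) x_g)(Σ_{g'∈G} χ₂(g') x_{g'}) = Σ_{h∈⟨a⟩} A_h, where A_h = Σ_{g∈⟨a⟩} (x_g x_{hg} − x_{gb} x_{hgb^{-1}}). -/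
lemma helperC {α : Type*} [Fintype α] [AddCommGroup α] (f g : α → ℂ) (c d : α) :
    ∑ k : α, ∑ i : α, (f i * f (k + i) - g (c - i) * g (d - (k + i))) =
      (∑ i, f i) * (∑ i, f i) - (∑ i, g i) * (∑ i, g i) := by
  rw [Finset.sum_comm]
  have h1 : ∀ i : α, ∑ k : α, f (k + i) = ∑ j, f j :=
    fun i => Fintype.sum_equiv (Equiv.addRight i) _ _ (fun k => rfl)
  have h2 : ∀ i : α, ∑ k : α, g (d - (k + i)) = ∑ j, g j :=
    fun i => Fintype.sum_equiv ((Equiv.addRight i).trans (Equiv.subLeft d)) _ _ (fun k => rfl)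
  have h3 : ∑ i : α, g (c - i) = ∑ j, g j :=
    Fintype.sum_equiv (Equiv.subLeft c) _ _ (fun k => rfl)
  simp only [Finset.sum_sub_distrib, ← Finset.mul_sum, h1, h2, ← Finset.sum_mul, h3]

lemma inv_sr0 (m : ℕ) : (DihedralGroup.sr 0 : DihedralGroup m)⁻¹ = DihedralGroup.sr 0 := by
  rw [inv_eq_iff_mul_eq_one]; simp

lemma inv_xa0 (m : ℕ) : (QuaternionGroup.xa 0 : QuaternionGroup m)⁻¹ = QuaternionGroup.xa m := by
  have h : ((m : ZMod (2*m)) + m) = 0 := by rw [← Nat.cast_add, ← two_mul, ZMod.natCast_self]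
  rw [inv_eq_iff_mul_eq_one]
  simp [h]


/-- `A_h` for the dihedral group `D_m`. -/
noncomputable def dihedralA (m : ℕ) [NeZero m] (x : DihedralGroup m → ℂ) (h : DihedralGroup m) : ℂ :=
  ∑ i : ZMod m,
    (x (DihedralGroup.r i) * x (h * DihedralGroup.r i) -
      x (DihedralGroup.r i * DihedralGroup.sr 0) *
        x (h * DihedralGroup.r i * (DihedralGroup.sr 0)⁻¹))

/-- `A_h` for the generalized quaternion group `Q_m`. -/
noncomputable def quaternionA (m : ℕ) [NeZero m] (x : QuaternionGroup m → ℂ) (h : QuaternionGroup m) : ℂ :=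
  ∑ i : ZMod (2 * m),
    (x (QuaternionGroup.a i) * x (h * QuaternionGroup.a i) -
      x (QuaternionGroup.a i * QuaternionGroup.xa 0) *
        x (h * QuaternionGroup.a i * (QuaternionGroup.xa 0)⁻¹))

/-- The degree one character `χ₂` of `D_m`: trivial on `⟨a⟩`, `−1` on the other coset. -/
def dihedralChi2 (m : ℕ) : DihedralGroup m → ℂ
  | DihedralGroup.r _ => 1
  | DihedralGroup.sr _ => -1

/-- The degree one character `χ₂` of `Q_m`: trivial on `⟨a⟩`, `−1` on the other coset. -/
def quaternionChi2 (m : ℕ) : QuaternionGroup m → ℂ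
  | QuaternionGroup.a _ => 1
  | QuaternionGroup.xa _ => -1

/-- For `G = D_m` or `Q_m`:
`(Σ_{g∈G} χ₁(g) x_g)(Σ_{g'∈G} χ₂(g') x_{g'}) = Σ_{h∈⟨a⟩} A_h`. -/
theorem chi1_mul_chi2_eq_sum_A (m : ℕ) [NeZero m]
    (x : DihedralGroup m → ℂ) (y : QuaternionGroup m → ℂ) :
    ((∑ g : DihedralGroup m, x g) * (∑ g' : DihedralGroup m, dihedralChi2 m g' * x g') =
      ∑ k : ZMod m, dihedralA m x (DihedralGroup.r k)) ∧
    ((∑ g : QuaternionGroup m, y g) * (∑ g' : QuaternionGroup m, quaternionChi2 m g' * y g') =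
      ∑ k : ZMod (2 * m), quaternionA m y (QuaternionGroup.a k)) := by
  constructor
  · have e1 : ∀ f : DihedralGroup m → ℂ, ∑ g, f g = ∑ i, f (.r i) + ∑ i, f (.sr i) := by
      intro f
      rw [← (Fintype.sum_equiv (⟨Sum.elim DihedralGroup.r DihedralGroup.sr,
        fun g => match g with | .r i => .inl i | .sr i => .inr i,
        by rintro (i|i) <;> rfl, by rintro (i|i) <;> rfl⟩ : ZMod m ⊕ ZMod m ≃ DihedralGroup m)
        (fun z => f _) f (fun z => rfl)), Fintype.sum_sum_type]
      rfl
    rw [e1 x, e1 (fun g => dihedralChi2 m g * x g)]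
    simp only [dihedralChi2, one_mul, neg_one_mul, Finset.sum_neg_distrib]
    unfold dihedralA
    simp only [DihedralGroup.r_mul_r, DihedralGroup.r_mul_sr, inv_sr0, inv_xa0]
    rw [helperC (fun i => x (.r i)) (fun i => x (.sr i)) 0 0]
    ring
  · have e1 : ∀ f : QuaternionGroup m → ℂ, ∑ g, f g = ∑ i, f (.a i) + ∑ i, f (.xa i) := by
      intro f
      rw [← (Fintype.sum_equiv (⟨Sum.elim QuaternionGroup.a QuaternionGroup.xa,
        fun g => match g with | .a i => .inl i | .xa i => .inr i,
        by rintro (i|i) <;> rfl, by rintro (i|i) <;> rfl⟩ :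
        ZMod (2*m) ⊕ ZMod (2*m) ≃ QuaternionGroup m)
        (fun z => f _) f (fun z => rfl)), Fintype.sum_sum_type]
      rfl
    rw [e1 y, e1 (fun g => quaternionChi2 m g * y g)]
    simp only [quaternionChi2, one_mul, neg_one_mul, Finset.sum_neg_distrib]
    unfold quaternionA
    simp only [QuaternionGroup.a_mul_a, QuaternionGroup.a_mul_xa, inv_xa0]
    rw [helperC (fun i => y (.a i)) (fun i => y (.xa i)) 0 m]
    ring
end

section
/- Let G = D_m with m ≥ 1, ω a primitive m-th root of unity, and for 1 ≤ l ≤ m−1 let φ_l be the degree-two representation with φ_l(a^k) = diag(ω^{lk}, ω^{-lk}) and φ_l(a^k b) = [[0, ω^{lk}],[ω^{-lk}, 0]]. Then det(Σ_{g∈G} φ_l(g) x_g) = Σ_{h∈⟨a⟩} χ'_l(h) A_h, where χ'_l(a^k) = ω^{lk} and A_h = Σ_{g∈⟨a⟩}(x_g x_{hg} − x_{gb} x_{hgb^{-1}}). -/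
open DihedralGroup

/-- For the degree two representation `φ_l` of `D_m` (with `φ_l(a^k) = diag(ω^{lk}, ω^{-lk})`
and `φ_l(a^k b) = [[0, ω^{lk}],[ω^{-lk}, 0]]`, `ω` a primitive `m`-th root of unity,
`1 ≤ l ≤ m − 1`), we have `det(Σ_{g∈G} φ_l(g) x_g) = Σ_{h∈⟨a⟩} χ'_l(h) A_h`. -/
theorem det_degree_two_rep_dihedral (m : ℕ) [NeZero m] (ω : ℂ)
    (hω : IsPrimitiveRoot ω m) (l : ℕ) (hl1 : 1 ≤ l) (hl2 : l ≤ m - 1)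
    (x : DihedralGroup m → ℂ) :
    (∑ k : ZMod m,
        (x (DihedralGroup.r k) • !![ω ^ (l * k.val), 0; 0, (ω ^ (l * k.val))⁻¹] +
         x (DihedralGroup.r k * DihedralGroup.sr 0) •
            !![0, ω ^ (l * k.val); (ω ^ (l * k.val))⁻¹, 0] :
          Matrix (Fin 2) (Fin 2) ℂ)).det =
      ∑ k : ZMod m, ω ^ (l * k.val) * dihedralA m x (DihedralGroup.r k) := by
  have hm : m ≠ 0 := NeZero.ne m
  have hω1 : ω ^ m = 1 := hω.pow_eq_one
  have hωne : ω ≠ 0 := by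
    intro h; rw [h, zero_pow hm] at hω1; exact zero_ne_one hω1
  have hmod : ∀ n : ℕ, ω ^ (n % m) = ω ^ n := by
    intro n
    conv_rhs => rw [← Nat.div_add_mod n m]
    rw [pow_add, pow_mul, hω1, one_pow, one_mul]
  have hwadd : ∀ c i : ZMod m,
      ω ^ (l * (c + i).val) = ω ^ (l * c.val) * ω ^ (l * i.val) := by
    intro c i
    rw [mul_comm l, mul_comm l, mul_comm l, pow_mul, pow_mul, pow_mul,
      ZMod.val_add, hmod, pow_add, mul_pow]
  have hwne : ∀ c : ZMod m, (ω : ℂ) ^ (l * c.val) ≠ 0 := fun c => pow_ne_zero _ hωne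
  have hsr : ((sr 0 : DihedralGroup m))⁻¹ = sr 0 :=
    (eq_inv_of_mul_eq_one_right (sr_mul_self 0)).symm
  rw [Matrix.det_fin_two]
  simp only [Matrix.sum_apply, Matrix.of_apply, Matrix.add_apply, Matrix.smul_apply,
    Matrix.cons_val', Matrix.cons_val_zero, Matrix.cons_val_one, Matrix.head_cons,
    Matrix.empty_val', Matrix.cons_val_fin_one, Matrix.head_fin_const, smul_eq_mul,
    mul_zero, add_zero, zero_add, mul_one]
  rw [Finset.sum_mul_sum, Finset.sum_mul_sum, ← Finset.sum_sub_distrib]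
  simp only [dihedralA, Finset.mul_sum, ← Finset.sum_sub_distrib]
  rw [← Finset.sum_product', ← Finset.sum_product']
  refine (Fintype.sum_equiv
    ⟨fun p : ZMod m × ZMod m => (p.1 + p.2, p.2), fun p => (p.1 - p.2, p.2),
      fun p => by simp, fun p => by simp⟩ _ _ fun p => ?_).symm
  obtain ⟨c, i⟩ := p
  simp only [Equiv.coe_fn_mk, r_mul_r, hsr, sr_mul_self]
  rw [hwadd]
  field_simp
end

section
/- Let G be D_m or Q_m. The group determinant factors as Θ(G) = ∏_{χ'∈⟨a⟩^} Σ_{g∈⟨a⟩} χ'(g) A_g, a product over all characters χ' of the cyclic subgroup ⟨a⟩, where A_h = Σ_{g∈⟨a⟩}(x_g x_{hg} − x_{gb} x_{hgb^{-1}}). In particular, Θ(G) is the circulant determinant in the quantities A_{a^k}. -/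
open Matrix Finset

private lemma pow_congr_mod {n : ℕ} {ζ : ℂ} (hζ : ζ ^ n = 1) {a b : ℕ}
    (h : a % n = b % n) : ζ ^ a = ζ ^ b := by
  conv_lhs => rw [← Nat.div_add_mod a n, pow_add, pow_mul, hζ, one_pow, one_mul, h]
  conv_rhs => rw [← Nat.div_add_mod b n, pow_add, pow_mul, hζ, one_pow, one_mul]

private lemma pow_val_add {n : ℕ} [NeZero n] {ζ : ℂ} (hζ : ζ ^ n = 1) (s t : ZMod n) :
    ζ ^ (s + t).val = ζ ^ s.val * ζ ^ t.val := by
  rw [← pow_add]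
  exact pow_congr_mod hζ (by rw [ZMod.val_add]; exact Nat.mod_mod_of_dvd _ dvd_rfl)

/-- the DFT equiv `ZMod n ≃ Fin n`. -/
private def zmodFin (n : ℕ) [NeZero n] : ZMod n ≃ Fin n where
  toFun a := ⟨a.val, a.val_lt⟩
  invFun i := ((i : ℕ) : ZMod n)
  left_inv a := ZMod.natCast_rightInverse a
  right_inv i := by ext; exact ZMod.val_natCast_of_lt i.isLt

/-- convolution identity for "DFT at ζ". -/
private lemma dft_mul {n : ℕ} [NeZero n] {ζ : ℂ} (hζ : ζ ^ n = 1) (v w : ZMod n → ℂ) :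
    (∑ s : ZMod n, ζ ^ s.val * v s) * (∑ s : ZMod n, ζ ^ s.val * w s)
      = ∑ k : ZMod n, ζ ^ k.val * ∑ s : ZMod n, v s * w (k - s) := by
  rw [Finset.sum_mul_sum]
  simp_rw [Finset.mul_sum]
  rw [← Fintype.sum_prod_type', ← Fintype.sum_prod_type']
  apply Fintype.sum_equiv (⟨fun p => (p.1 + p.2, p.1), fun p => (p.2, p.1 - p.2),
    fun p => by simp, fun p => by simp⟩ : (ZMod n × ZMod n) ≃ (ZMod n × ZMod n))
  intro p
  simp only [Equiv.coe_fn_mk]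
  rw [pow_val_add hζ, add_sub_cancel_left]
  ring

private noncomputable def dftF (n : ℕ) [NeZero n] (ω : ℂ) : Matrix (ZMod n) (ZMod n) ℂ :=
  Matrix.of fun j l => ω ^ (l.val * (-j).val)

private lemma circulant_mul_dftF {n : ℕ} [NeZero n] {ω : ℂ} (hω : ω ^ n = 1)
    (v : ZMod n → ℂ) :
    circulant v * dftF n ω
      = dftF n ω * diagonal (fun l : ZMod n => ∑ s : ZMod n, ω ^ (l.val * s.val) * v s) := by
  ext j l
  rw [Matrix.mul_diagonal]
  have hζ : (ω ^ l.val) ^ n = 1 := by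
    rw [← pow_mul, mul_comm, pow_mul, hω, one_pow]
  calc (circulant v * dftF n ω) j l
      = ∑ k : ZMod n, v (j - k) * (ω ^ l.val) ^ (-k).val := by
        simp [Matrix.mul_apply, dftF, circulant_apply, pow_mul]
    _ = ∑ s : ZMod n, v s * (ω ^ l.val) ^ (s - j).val := by
        apply Fintype.sum_equiv (Equiv.subLeft j)
        intro s
        simp [Equiv.subLeft, neg_sub]
    _ = ∑ s : ZMod n, v s * ((ω ^ l.val) ^ (-j).val * (ω ^ l.val) ^ s.val) := by
        apply Finset.sum_congr rfl; intro s _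
        rw [show s - j = -j + s by ring, pow_val_add hζ]
    _ = dftF n ω j l * ∑ s : ZMod n, ω ^ (l.val * s.val) * v s := by
        rw [Finset.mul_sum]
        apply Finset.sum_congr rfl; intro s _
        simp [dftF, pow_mul]; ring

private lemma dftF_det_ne_zero {n : ℕ} [NeZero n] {ω : ℂ} (hω : IsPrimitiveRoot ω n) :
    (dftF n ω).det ≠ 0 := by
  have : dftF n ω = (Matrix.vandermonde (fun i : Fin n => ω ^ ((-(((i : ℕ) : ZMod n))).val))).submatrix
      (zmodFin n) (zmodFin n) := by
    ext j l
    simp only [dftF, Matrix.submatrix_apply, Matrix.vandermonde]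
    rw [Matrix.of_apply, Matrix.of_apply]
    have h1 : (((zmodFin n j : Fin n) : ℕ) : ZMod n) = j := ZMod.natCast_rightInverse j
    rw [h1]
    show ω ^ (l.val * (-j).val) = (ω ^ (-j).val) ^ ((zmodFin n l : Fin n) : ℕ)
    rw [← pow_mul]
    congr 1
    show l.val * (-j).val = (-j).val * l.val
    ring
  rw [this, Matrix.det_submatrix_equiv_self]
  rw [Matrix.det_vandermonde_ne_zero_iff]
  intro i j h
  have hne : ∀ i : Fin n, (-(((i : ℕ) : ZMod n))).val < n := fun _ => ZMod.val_lt _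
  have := hω.pow_inj (hne i) (hne j) h
  have h2 : (-(((i : ℕ) : ZMod n))) = (-(((j : ℕ) : ZMod n))) := ZMod.val_injective n this
  have h3 : ((i : ℕ) : ZMod n) = ((j : ℕ) : ZMod n) := by
    have := congrArg Neg.neg h2; simpa using this
  have := congrArg ZMod.val h3
  rw [ZMod.val_natCast_of_lt i.isLt, ZMod.val_natCast_of_lt j.isLt] at this
  exact Fin.ext this

/-- product over `ZMod n` as product over `range n`. -/
private lemma prod_zmod_eq_range {n : ℕ} [NeZero n] (f : ZMod n → ℂ) :
    ∏ k : ZMod n, f k = ∏ l ∈ Finset.range n, f ((l : ℕ) : ZMod n) := by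
  rw [← Fin.prod_univ_eq_prod_range]
  exact Fintype.prod_equiv (zmodFin n) _ _ (fun k => by
    congr 1; exact (ZMod.natCast_rightInverse k).symm)

/-- Core: determinant of a 2×2 block matrix of circulants. -/
private lemma det_fromBlocks_circulant {n : ℕ} [NeZero n] {ω : ℂ} (hω : IsPrimitiveRoot ω n)
    (v w u z : ZMod n → ℂ) :
    (Matrix.fromBlocks (circulant v) (circulant w) (circulant u) (circulant z)).det
      = ∏ l ∈ Finset.range n,
          ((∑ s : ZMod n, ω ^ (l * s.val) * v s) * (∑ s : ZMod n, ω ^ (l * s.val) * z s)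
            - (∑ s : ZMod n, ω ^ (l * s.val) * w s) * (∑ s : ZMod n, ω ^ (l * s.val) * u s)) := by
  have hω1 : ω ^ n = 1 := hω.pow_eq_one
  have hFd : ∀ vv : ZMod n → ℂ, circulant vv * dftF n ω
      = dftF n ω * diagonal (fun l : ZMod n => ∑ s : ZMod n, ω ^ (l.val * s.val) * vv s) :=
    fun vv => circulant_mul_dftF hω1 vv
  set F := dftF n ω with hF
  set d : (ZMod n → ℂ) → ZMod n → ℂ := fun v l => ∑ s : ZMod n, ω ^ (l.val * s.val) * v s with hd
  have key : Matrix.fromBlocks (circulant v) (circulant w) (circulant u) (circulant z)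
        * Matrix.fromBlocks F 0 0 F
      = Matrix.fromBlocks F 0 0 F *
        Matrix.fromBlocks (diagonal (d v)) (diagonal (d w)) (diagonal (d u)) (diagonal (d z)) := by
    rw [Matrix.fromBlocks_multiply, Matrix.fromBlocks_multiply]
    simp only [Matrix.mul_zero, Matrix.zero_mul, add_zero, zero_add, hFd]
    rfl
  have hdetF : F.det ≠ 0 := dftF_det_ne_zero hω
  have hdet := congrArg Matrix.det key
  rw [Matrix.det_mul, Matrix.det_mul, Matrix.det_fromBlocks_zero₂₁] at hdet
  have hcancel : (Matrix.fromBlocks (circulant v) (circulant w) (circulant u)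
        (circulant z)).det
      = (Matrix.fromBlocks (diagonal (d v)) (diagonal (d w)) (diagonal (d u))
          (diagonal (d z))).det := by
    have hFF : F.det * F.det ≠ 0 := mul_ne_zero hdetF hdetF
    apply mul_right_cancel₀ hFF
    rw [hdet, mul_comm]
  rw [hcancel]
  -- now the fromBlocks of diagonals
  have hblock : Matrix.fromBlocks (diagonal (d v)) (diagonal (d w)) (diagonal (d u))
        (diagonal (d z))
      = (Matrix.blockDiagonal (fun k : ZMod n => !![d v k, d w k; d u k, d z k])).submatrix
          (⟨fun i => Sum.elim (fun s => ((0 : Fin 2), s)) (fun s => ((1 : Fin 2), s)) i,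
            fun p => if p.1 = 0 then Sum.inl p.2 else Sum.inr p.2, by
              rintro (s|s) <;> simp, by
              rintro ⟨i, s⟩; fin_cases i <;> simp⟩ :
            (ZMod n ⊕ ZMod n) ≃ (Fin 2 × ZMod n))
          (⟨fun i => Sum.elim (fun s => ((0 : Fin 2), s)) (fun s => ((1 : Fin 2), s)) i,
            fun p => if p.1 = 0 then Sum.inl p.2 else Sum.inr p.2, by
              rintro (s|s) <;> simp, by
              rintro ⟨i, s⟩; fin_cases i <;> simp⟩ :
            (ZMod n ⊕ ZMod n) ≃ (Fin 2 × ZMod n)) := by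
    ext i j
    rcases i with i | i <;> rcases j with j | j <;>
      rcases eq_or_ne i j with h | h <;>
      simp [Matrix.blockDiagonal_apply, Matrix.diagonal_apply, h]
  rw [hblock, Matrix.det_submatrix_equiv_self, Matrix.det_blockDiagonal]
  simp_rw [Matrix.det_fin_two_of]
  rw [prod_zmod_eq_range]
  apply Finset.prod_congr rfl
  intro l hl
  have hval : (((l : ℕ) : ZMod n)).val = l := ZMod.val_natCast_of_lt (Finset.mem_range.mp hl)
  simp only [hd, hval]

private def dihedralSum (m : ℕ) : (ZMod m ⊕ ZMod m) ≃ DihedralGroup m where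
  toFun i := match i with | Sum.inl j => .r j | Sum.inr j => .sr j
  invFun g := match g with | .r j => Sum.inl j | .sr j => Sum.inr j
  left_inv := by rintro (x | x) <;> rfl
  right_inv := by rintro (x | x) <;> rfl

private def quaternionSum (m : ℕ) : (ZMod (2 * m) ⊕ ZMod (2 * m)) ≃ QuaternionGroup m where
  toFun i := match i with | Sum.inl j => .a j | Sum.inr j => .xa j
  invFun g := match g with | .a j => Sum.inl j | .xa j => Sum.inr j
  left_inv := by rintro (x | x) <;> rfl
  right_inv := by rintro (x | x) <;> rfl

private lemma dihedral_key (m : ℕ) [NeZero m] {ω : ℂ} (hω : ω ^ m = 1) (l : ℕ)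
    (x : DihedralGroup m → ℂ) :
    (∑ s : ZMod m, ω ^ (l * s.val) * x (.r s)) *
        (∑ s : ZMod m, ω ^ (l * s.val) * x (.r (-s)))
      - (∑ s : ZMod m, ω ^ (l * s.val) * x (.sr (-s))) *
          (∑ s : ZMod m, ω ^ (l * s.val) * x (.sr s))
    = ∑ k : ZMod m, ω ^ (l * k.val) * dihedralA m x (.r k) := by
  have hζ : (ω ^ l) ^ m = 1 := by rw [← pow_mul, mul_comm, pow_mul, hω, one_pow]
  simp_rw [pow_mul]
  rw [dft_mul hζ (fun s => x (.r s)) (fun s => x (.r (-s))),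
    dft_mul hζ (fun s => x (.sr (-s))) (fun s => x (.sr s)),
    ← Finset.sum_sub_distrib]
  apply Finset.sum_congr rfl
  intro k _
  rw [← mul_sub]
  congr 1
  have hsr : ∀ j : ZMod m, (DihedralGroup.sr j)⁻¹ = DihedralGroup.sr j := fun _ => rfl
  simp only [dihedralA, DihedralGroup.r_mul_r, DihedralGroup.r_mul_sr, hsr]
  rw [← Finset.sum_sub_distrib]
  apply Fintype.sum_equiv (Equiv.subRight k)
  intro i
  simp only [Equiv.subRight_apply]
  ring_nf

private lemma quaternion_key (m : ℕ) [NeZero m] {ω : ℂ} (hω : ω ^ (2 * m) = 1) (l : ℕ)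
    (y : QuaternionGroup m → ℂ) :
    haveI : NeZero (2 * m) := ⟨Nat.mul_ne_zero two_ne_zero (NeZero.ne m)⟩
    (∑ s : ZMod (2 * m), ω ^ (l * s.val) * y (.a s)) *
        (∑ s : ZMod (2 * m), ω ^ (l * s.val) * y (.a (-s)))
      - (∑ s : ZMod (2 * m), ω ^ (l * s.val) * y (.xa ((m : ZMod (2 * m)) - s))) *
          (∑ s : ZMod (2 * m), ω ^ (l * s.val) * y (.xa s))
    = ∑ k : ZMod (2 * m), ω ^ (l * k.val) * quaternionA m y (.a k) := by
  haveI : NeZero (2 * m) := ⟨Nat.mul_ne_zero two_ne_zero (NeZero.ne m)⟩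
  have hζ : (ω ^ l) ^ (2 * m) = 1 := by rw [← pow_mul, mul_comm, pow_mul, hω, one_pow]
  simp_rw [pow_mul]
  rw [dft_mul hζ (fun s => y (.a s)) (fun s => y (.a (-s))),
    dft_mul hζ (fun s => y (.xa ((m : ZMod (2 * m)) - s))) (fun s => y (.xa s)),
    ← Finset.sum_sub_distrib]
  apply Finset.sum_congr rfl
  intro k _
  rw [← mul_sub]
  congr 1
  have hxa : ∀ j : ZMod (2 * m), (QuaternionGroup.xa j)⁻¹
      = QuaternionGroup.xa ((m : ZMod (2 * m)) + j) := fun _ => rfl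
  simp only [quaternionA, QuaternionGroup.a_mul_a, QuaternionGroup.a_mul_xa, hxa,
    QuaternionGroup.xa_mul_a]
  rw [← Finset.sum_sub_distrib]
  apply Fintype.sum_equiv (Equiv.subRight k)
  intro i
  simp only [Equiv.subRight_apply, QuaternionGroup.a_mul_xa]
  ring_nf

private lemma dihedral_blocks (m : ℕ) [NeZero m] (x : DihedralGroup m → ℂ) :
    (Matrix.of fun g h : DihedralGroup m => x (g * h⁻¹)).submatrix
        (dihedralSum m) (dihedralSum m)
      = Matrix.fromBlocks
          (circulant fun t => x (.r t)) (circulant fun t => x (.sr (-t)))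
          (circulant fun t => x (.sr t)) (circulant fun t => x (.r (-t))) := by
  have hr : ∀ j : ZMod m, (DihedralGroup.r j)⁻¹ = DihedralGroup.r (-j) := fun _ => rfl
  have hsr : ∀ j : ZMod m, (DihedralGroup.sr j)⁻¹ = DihedralGroup.sr j := fun _ => rfl
  ext i j
  rcases i with i | i <;> rcases j with j | j <;>
    · simp only [Matrix.submatrix_apply, Matrix.of_apply, dihedralSum, Equiv.coe_fn_mk,
        hr, hsr, DihedralGroup.r_mul_r, DihedralGroup.r_mul_sr, DihedralGroup.sr_mul_r,
        DihedralGroup.sr_mul_sr, Matrix.fromBlocks_apply₁₁, Matrix.fromBlocks_apply₁₂,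
        Matrix.fromBlocks_apply₂₁, Matrix.fromBlocks_apply₂₂, circulant_apply]
      congr 1
      ring_nf

private lemma quaternion_blocks (m : ℕ) [NeZero m] (y : QuaternionGroup m → ℂ) :
    haveI : NeZero (2 * m) := ⟨Nat.mul_ne_zero two_ne_zero (NeZero.ne m)⟩
    (Matrix.of fun g h : QuaternionGroup m => y (g * h⁻¹)).submatrix
        (quaternionSum m) (quaternionSum m)
      = Matrix.fromBlocks
          (circulant fun t => y (.a t)) (circulant fun t => y (.xa ((m : ZMod (2 * m)) - t)))
          (circulant fun t => y (.xa t)) (circulant fun t => y (.a (-t))) := by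
  haveI : NeZero (2 * m) := ⟨Nat.mul_ne_zero two_ne_zero (NeZero.ne m)⟩
  have ha : ∀ j : ZMod (2 * m), (QuaternionGroup.a j)⁻¹ = QuaternionGroup.a (-j) := fun _ => rfl
  have hxa : ∀ j : ZMod (2 * m), (QuaternionGroup.xa j)⁻¹
      = QuaternionGroup.xa ((m : ZMod (2 * m)) + j) := fun _ => rfl
  have h2m : (m : ZMod (2 * m)) + (m : ZMod (2 * m)) = 0 := by
    rw [← Nat.cast_add, ← two_mul, ZMod.natCast_self]
  ext i j
  rcases i with i | i <;> rcases j with j | j <;>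
    · simp only [Matrix.submatrix_apply, Matrix.of_apply, quaternionSum, Equiv.coe_fn_mk,
        ha, hxa, QuaternionGroup.a_mul_a, QuaternionGroup.a_mul_xa, QuaternionGroup.xa_mul_a,
        QuaternionGroup.xa_mul_xa, Matrix.fromBlocks_apply₁₁, Matrix.fromBlocks_apply₁₂,
        Matrix.fromBlocks_apply₂₁, Matrix.fromBlocks_apply₂₂, circulant_apply]
      congr 1
      congr 1
      first
        | linear_combination h2m
        | ring

/-- For `G = D_m` or `Q_m`, the group determinant `Θ(G) = det(x_{gh⁻¹})_{g,h}` equals the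
circulant determinant `∏_{χ'∈⟨a⟩^} Σ_{g∈⟨a⟩} χ'(g) A_g`, the product running over all
characters `χ'_l(a^k) = ω^{lk}` of the cyclic subgroup `⟨a⟩`. -/
theorem group_det_eq_circulant_det (m : ℕ) [NeZero m]
    (ωD ωQ : ℂ) (hωD : IsPrimitiveRoot ωD m) (hωQ : IsPrimitiveRoot ωQ (2 * m))
    (x : DihedralGroup m → ℂ) (y : QuaternionGroup m → ℂ) :
    ((Matrix.of fun g h : DihedralGroup m => x (g * h⁻¹)).det =
      ∏ l ∈ Finset.range m,
        ∑ k : ZMod m, ωD ^ (l * k.val) * dihedralA m x (DihedralGroup.r k)) ∧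
    ((Matrix.of fun g h : QuaternionGroup m => y (g * h⁻¹)).det =
      ∏ l ∈ Finset.range (2 * m),
        ∑ k : ZMod (2 * m), ωQ ^ (l * k.val) * quaternionA m y (QuaternionGroup.a k)) := by
  haveI : NeZero (2 * m) := ⟨Nat.mul_ne_zero two_ne_zero (NeZero.ne m)⟩
  constructor
  · rw [← Matrix.det_submatrix_equiv_self (dihedralSum m), dihedral_blocks m x,
      det_fromBlocks_circulant hωD]
    exact Finset.prod_congr rfl fun l _ => dihedral_key m hωD.pow_eq_one l x
  · rw [← Matrix.det_submatrix_equiv_self (quaternionSum m), quaternion_blocks m y,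
      det_fromBlocks_circulant hωQ]
    exact Finset.prod_congr rfl fun l _ => quaternion_key m hωQ.pow_eq_one l y
end

section
/- Let G be D_m or Q_m and define α₁ = Σ_{g∈G} x_g g and α₂ = Σ_{g∈⟨a⟩} χ₂(g) x_{g^{-1}} g + Σ_{g∈G\⟨a⟩} χ₂(g) x_g g in C[G], where χ₂ is the degree-one character trivial on ⟨a⟩ with χ₂(b) = −1. Then α₁ α₂ = Σ_{h∈⟨a⟩} A_h h, where A_h = Σ_{g∈⟨a⟩}(x_g x_{hg} − x_{gb} x_{hgb^{-1}}). -/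
section DHelp

open DihedralGroup MonoidAlgebra

variable {N M : Type*} [AddCommGroup N] [Fintype N] [AddCommMonoid M]

lemma sum_shift (c : N) (F : N → M) : ∑ k, F (k + c) = ∑ k, F k :=
  Equiv.sum_comp (Equiv.addRight c) F

lemma sum_negidx (F : N → M) : ∑ k, F (-k) = ∑ k, F k :=
  Equiv.sum_comp (Equiv.neg N) F

lemma single_sum {G : Type*} {R : Type*} [Semiring R] (g : G) {ι : Type*} (s : Finset ι)
    (f : ι → R) :
    (MonoidAlgebra.single g (∑ i ∈ s, f i) : MonoidAlgebra R G) =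
      ∑ i ∈ s, MonoidAlgebra.single g (f i) :=
  map_sum (MonoidAlgebra.singleAddHom g) f s

lemma r_inv' (m : ℕ) [NeZero m] (k : ZMod m) : (r k : DihedralGroup m)⁻¹ = r (-k) :=
  inv_eq_of_mul_eq_one_right (by rw [r_mul_r, add_neg_cancel]; rfl)

lemma sr_inv' (m : ℕ) [NeZero m] (k : ZMod m) : (sr k : DihedralGroup m)⁻¹ = sr k :=
  inv_eq_of_mul_eq_one_right (by rw [sr_mul_sr, sub_self]; rfl)

lemma dihedral_half (m : ℕ) [NeZero m] (x : DihedralGroup m → ℂ)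
    (A : DihedralGroup m → ℂ)
    (hA : ∀ j, A (r j) = ∑ i : ZMod m, (x (r i) * x (r (j + i)) - x (sr (-i)) * x (sr (-(j + i))))) :
    ((∑ g : DihedralGroup m, (single g (x g) : MonoidAlgebra ℂ (DihedralGroup m))) *
      ((∑ k : ZMod m, single (r k) (x ((r k)⁻¹))) +
        ∑ k : ZMod m, single (sr k) (-(x (sr k)))) =
      ∑ k : ZMod m, single (r k) (A (r k))) := by
  have hsplit : (∑ g : DihedralGroup m, (single g (x g) : MonoidAlgebra ℂ (DihedralGroup m))) =
      (∑ i : ZMod m, single (r i) (x (r i))) + ∑ i : ZMod m, single (sr i) (x (sr i)) := by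
    let e : ZMod m ⊕ ZMod m ≃ DihedralGroup m :=
      { toFun := fun s => match s with | .inl j => r j | .inr j => sr j
        invFun := fun g => match g with | r j => .inl j | sr j => .inr j
        left_inv := by rintro (j | j) <;> rfl
        right_inv := by rintro (j | j) <;> rfl }
    rw [← e.sum_comp (fun g => (single g (x g) : MonoidAlgebra ℂ (DihedralGroup m))),
      Fintype.sum_sum_type]
    rfl
  rw [hsplit, add_mul, mul_add, mul_add, Finset.sum_mul_sum, Finset.sum_mul_sum,
    Finset.sum_mul_sum, Finset.sum_mul_sum]
  simp only [MonoidAlgebra.single_mul_single, r_mul_r, r_mul_sr, sr_mul_r, sr_mul_sr, r_inv']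
  have hrr : (∑ i : ZMod m, ∑ k : ZMod m,
        (single (r (i + k)) (x (r i) * x (r (-k))) : MonoidAlgebra ℂ (DihedralGroup m))) =
      ∑ j : ZMod m, single (r j) (∑ i : ZMod m, x (r i) * x (r (i - j))) :=
    calc _ = ∑ i : ZMod m, ∑ j : ZMod m,
          (single (r j) (x (r i) * x (r (i - j))) : MonoidAlgebra ℂ (DihedralGroup m)) :=
        Finset.sum_congr rfl fun i _ => Fintype.sum_equiv (Equiv.addLeft i) _ _
          (fun k => by simp [sub_add_cancel_left])
      _ = ∑ j : ZMod m, ∑ i : ZMod m,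
          (single (r j) (x (r i) * x (r (i - j))) : MonoidAlgebra ℂ (DihedralGroup m)) :=
        Finset.sum_comm
      _ = _ := Finset.sum_congr rfl fun j _ => (single_sum _ _ _).symm
  have hss : (∑ i : ZMod m, ∑ k : ZMod m,
        (single (r (k - i)) (x (sr i) * -x (sr k)) : MonoidAlgebra ℂ (DihedralGroup m))) =
      ∑ j : ZMod m, single (r j) (∑ i : ZMod m, -(x (sr i) * x (sr (j + i)))) :=
    calc _ = ∑ i : ZMod m, ∑ j : ZMod m,
          (single (r j) (-(x (sr i) * x (sr (j + i)))) : MonoidAlgebra ℂ (DihedralGroup m)) :=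
        Finset.sum_congr rfl fun i _ => Fintype.sum_equiv (Equiv.subRight i) _ _
          (fun k => by simp [sub_add_cancel])
      _ = ∑ j : ZMod m, ∑ i : ZMod m,
          (single (r j) (-(x (sr i) * x (sr (j + i)))) : MonoidAlgebra ℂ (DihedralGroup m)) :=
        Finset.sum_comm
      _ = _ := Finset.sum_congr rfl fun j _ => (single_sum _ _ _).symm
  have hrs : (∑ i : ZMod m, ∑ k : ZMod m,
        (single (sr (k - i)) (x (r i) * -x (sr k)) : MonoidAlgebra ℂ (DihedralGroup m))) =
      ∑ j : ZMod m, single (sr j) (∑ i : ZMod m, -(x (r i) * x (sr (j + i)))) :=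
    calc _ = ∑ i : ZMod m, ∑ j : ZMod m,
          (single (sr j) (-(x (r i) * x (sr (j + i)))) : MonoidAlgebra ℂ (DihedralGroup m)) :=
        Finset.sum_congr rfl fun i _ => Fintype.sum_equiv (Equiv.subRight i) _ _
          (fun k => by simp [sub_add_cancel])
      _ = ∑ j : ZMod m, ∑ i : ZMod m,
          (single (sr j) (-(x (r i) * x (sr (j + i)))) : MonoidAlgebra ℂ (DihedralGroup m)) :=
        Finset.sum_comm
      _ = _ := Finset.sum_congr rfl fun j _ => (single_sum _ _ _).symm
  have hsr : (∑ i : ZMod m, ∑ k : ZMod m,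
        (single (sr (i + k)) (x (sr i) * x (r (-k))) : MonoidAlgebra ℂ (DihedralGroup m))) =
      ∑ j : ZMod m, single (sr j) (∑ i : ZMod m, x (sr i) * x (r (i - j))) :=
    calc _ = ∑ i : ZMod m, ∑ j : ZMod m,
          (single (sr j) (x (sr i) * x (r (i - j))) : MonoidAlgebra ℂ (DihedralGroup m)) :=
        Finset.sum_congr rfl fun i _ => Fintype.sum_equiv (Equiv.addLeft i) _ _
          (fun k => by simp [sub_add_cancel_left])
      _ = ∑ j : ZMod m, ∑ i : ZMod m,
          (single (sr j) (x (sr i) * x (r (i - j))) : MonoidAlgebra ℂ (DihedralGroup m)) :=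
        Finset.sum_comm
      _ = _ := Finset.sum_congr rfl fun j _ => (single_sum _ _ _).symm
  rw [hrr, hss, hrs, hsr]
  have hcancel : (∑ j : ZMod m,
        (single (sr j) (∑ i : ZMod m, x (sr i) * x (r (i - j))) : MonoidAlgebra ℂ (DihedralGroup m))) +
      ∑ j : ZMod m, single (sr j) (∑ i : ZMod m, -(x (r i) * x (sr (j + i)))) = 0 := by
    rw [← Finset.sum_add_distrib]
    refine Finset.sum_eq_zero fun j _ => ?_
    rw [← MonoidAlgebra.single_add]
    have h2 : (∑ i : ZMod m, x (sr i) * x (r (i - j))) =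
        ∑ i : ZMod m, x (sr (j + i)) * x (r i) :=
      (Fintype.sum_equiv (Equiv.addLeft j) _ _ (fun i => by simp)).symm
    have h3 : (∑ i : ZMod m, x (sr (j + i)) * x (r i)) +
        ∑ i : ZMod m, -(x (r i) * x (sr (j + i))) = 0 := by
      rw [← Finset.sum_add_distrib]
      exact Finset.sum_eq_zero fun i _ => by ring
    rw [h2, h3, MonoidAlgebra.single_zero]
  have hmain : (∑ j : ZMod m,
        (single (r j) (∑ i : ZMod m, x (r i) * x (r (i - j))) : MonoidAlgebra ℂ (DihedralGroup m))) +
      ∑ j : ZMod m, single (r j) (∑ i : ZMod m, -(x (sr i) * x (sr (j + i)))) =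
      ∑ k : ZMod m, single (r k) (A (r k)) := by
    rw [← Finset.sum_add_distrib]
    refine Finset.sum_congr rfl fun j _ => ?_
    rw [← MonoidAlgebra.single_add, hA j]
    congr 1
    rw [Finset.sum_sub_distrib]
    have h4 : (∑ i : ZMod m, x (r i) * x (r (j + i))) =
        ∑ i : ZMod m, x (r i) * x (r (i - j)) :=
      Fintype.sum_equiv (Equiv.addLeft j) _ _ (fun i => by simp [mul_comm])
    have h5 : (∑ i : ZMod m, x (sr (-i)) * x (sr (-(j + i)))) =
        ∑ i : ZMod m, x (sr i) * x (sr (j + i)) :=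
      Fintype.sum_equiv ((Equiv.addLeft j).trans (Equiv.neg _)) _ _
        (fun i => by
          simp only [Equiv.trans_apply, Equiv.neg_apply, Equiv.coe_addLeft]
          rw [show j + -(j + i) = -i by ring, mul_comm])
    rw [h4, h5, sub_eq_add_neg, ← Finset.sum_neg_distrib]
  linear_combination (norm := abel) hmain + hcancel

end DHelp

section QHelp

open QuaternionGroup MonoidAlgebra

variable {N M : Type*} [AddCommGroup N] [Fintype N] [AddCommMonoid M]

lemma single_sum' {G : Type*} {R : Type*} [Semiring R] (g : G) {ι : Type*} (s : Finset ι)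
    (f : ι → R) :
    (MonoidAlgebra.single g (∑ i ∈ s, f i) : MonoidAlgebra R G) =
      ∑ i ∈ s, MonoidAlgebra.single g (f i) :=
  map_sum (MonoidAlgebra.singleAddHom g) f s

lemma a_inv' (m : ℕ) [NeZero m] (k : ZMod (2 * m)) : (a k : QuaternionGroup m)⁻¹ = a (-k) :=
  inv_eq_of_mul_eq_one_right (by rw [a_mul_a, add_neg_cancel]; rfl)

lemma xa_zero_inv (m : ℕ) [NeZero m] :
    (xa 0 : QuaternionGroup m)⁻¹ = xa (m : ZMod (2 * m)) :=
  inv_eq_of_mul_eq_one_right (by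
    rw [xa_mul_xa, sub_zero, ← Nat.cast_add, ← two_mul, ZMod.natCast_self]; rfl)

lemma quaternion_half (m : ℕ) [NeZero m] (y : QuaternionGroup m → ℂ)
    (A : QuaternionGroup m → ℂ)
    (hA : ∀ j : ZMod (2 * m), A (a j) = ∑ i : ZMod (2 * m),
      (y (a i) * y (a (j + i)) - y (xa (-i)) * y (xa ((m : ZMod (2 * m)) - (j + i))))) :
    ((∑ g : QuaternionGroup m, (single g (y g) : MonoidAlgebra ℂ (QuaternionGroup m))) *
      ((∑ k : ZMod (2 * m), single (a k) (y ((a k)⁻¹))) +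
        ∑ k : ZMod (2 * m), single (xa k) (-(y (xa k)))) =
      ∑ k : ZMod (2 * m), single (a k) (A (a k))) := by
  have hsplit : (∑ g : QuaternionGroup m, (single g (y g) : MonoidAlgebra ℂ (QuaternionGroup m))) =
      (∑ i : ZMod (2 * m), single (a i) (y (a i))) +
        ∑ i : ZMod (2 * m), single (xa i) (y (xa i)) := by
    let e : ZMod (2 * m) ⊕ ZMod (2 * m) ≃ QuaternionGroup m :=
      { toFun := fun s => match s with | .inl j => a j | .inr j => xa j
        invFun := fun g => match g with | a j => .inl j | xa j => .inr j
        left_inv := by rintro (j | j) <;> rfl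
        right_inv := by rintro (j | j) <;> rfl }
    rw [← e.sum_comp (fun g => (single g (y g) : MonoidAlgebra ℂ (QuaternionGroup m))),
      Fintype.sum_sum_type]
    rfl
  rw [hsplit, add_mul, mul_add, mul_add, Finset.sum_mul_sum, Finset.sum_mul_sum,
    Finset.sum_mul_sum, Finset.sum_mul_sum]
  simp only [MonoidAlgebra.single_mul_single, a_mul_a, a_mul_xa, xa_mul_a, xa_mul_xa, a_inv']
  have haa : (∑ i : ZMod (2 * m), ∑ k : ZMod (2 * m),
        (single (a (i + k)) (y (a i) * y (a (-k))) : MonoidAlgebra ℂ (QuaternionGroup m))) =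
      ∑ j : ZMod (2 * m), single (a j) (∑ i : ZMod (2 * m), y (a i) * y (a (i - j))) :=
    calc _ = ∑ i : ZMod (2 * m), ∑ j : ZMod (2 * m),
          (single (a j) (y (a i) * y (a (i - j))) : MonoidAlgebra ℂ (QuaternionGroup m)) :=
        Finset.sum_congr rfl fun i _ => Fintype.sum_equiv (Equiv.addLeft i) _ _
          (fun k => by simp [sub_add_cancel_left])
      _ = ∑ j : ZMod (2 * m), ∑ i : ZMod (2 * m),
          (single (a j) (y (a i) * y (a (i - j))) : MonoidAlgebra ℂ (QuaternionGroup m)) :=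
        Finset.sum_comm
      _ = _ := Finset.sum_congr rfl fun j _ => (single_sum' _ _ _).symm
  have hxx : (∑ i : ZMod (2 * m), ∑ k : ZMod (2 * m),
        (single (a ((m : ZMod (2 * m)) + k - i)) (y (xa i) * -y (xa k)) :
          MonoidAlgebra ℂ (QuaternionGroup m))) =
      ∑ j : ZMod (2 * m), single (a j)
        (∑ i : ZMod (2 * m), -(y (xa i) * y (xa (j + i - (m : ZMod (2 * m)))))) :=
    calc _ = ∑ i : ZMod (2 * m), ∑ j : ZMod (2 * m),
          (single (a j) (-(y (xa i) * y (xa (j + i - (m : ZMod (2 * m)))))) :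
            MonoidAlgebra ℂ (QuaternionGroup m)) :=
        Finset.sum_congr rfl fun i _ =>
          Fintype.sum_equiv ((Equiv.subRight i).trans (Equiv.addLeft (m : ZMod (2 * m)))) _ _
            (fun k => by
              simp only [Equiv.trans_apply, Equiv.subRight_apply, Equiv.coe_addLeft]
              rw [show (m : ZMod (2 * m)) + (k - i) + i - (m : ZMod (2 * m)) = k by ring,
                show (m : ZMod (2 * m)) + (k - i) = (m : ZMod (2 * m)) + k - i by ring]
              ring_nf)
      _ = ∑ j : ZMod (2 * m), ∑ i : ZMod (2 * m),
          (single (a j) (-(y (xa i) * y (xa (j + i - (m : ZMod (2 * m)))))) :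
            MonoidAlgebra ℂ (QuaternionGroup m)) :=
        Finset.sum_comm
      _ = _ := Finset.sum_congr rfl fun j _ => (single_sum' _ _ _).symm
  have hax : (∑ i : ZMod (2 * m), ∑ k : ZMod (2 * m),
        (single (xa (k - i)) (y (a i) * -y (xa k)) : MonoidAlgebra ℂ (QuaternionGroup m))) =
      ∑ j : ZMod (2 * m), single (xa j) (∑ i : ZMod (2 * m), -(y (a i) * y (xa (j + i)))) :=
    calc _ = ∑ i : ZMod (2 * m), ∑ j : ZMod (2 * m),
          (single (xa j) (-(y (a i) * y (xa (j + i)))) : MonoidAlgebra ℂ (QuaternionGroup m)) :=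
        Finset.sum_congr rfl fun i _ => Fintype.sum_equiv (Equiv.subRight i) _ _
          (fun k => by simp [sub_add_cancel])
      _ = ∑ j : ZMod (2 * m), ∑ i : ZMod (2 * m),
          (single (xa j) (-(y (a i) * y (xa (j + i)))) : MonoidAlgebra ℂ (QuaternionGroup m)) :=
        Finset.sum_comm
      _ = _ := Finset.sum_congr rfl fun j _ => (single_sum' _ _ _).symm
  have hxa : (∑ i : ZMod (2 * m), ∑ k : ZMod (2 * m),
        (single (xa (i + k)) (y (xa i) * y (a (-k))) : MonoidAlgebra ℂ (QuaternionGroup m))) =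
      ∑ j : ZMod (2 * m), single (xa j) (∑ i : ZMod (2 * m), y (xa i) * y (a (i - j))) :=
    calc _ = ∑ i : ZMod (2 * m), ∑ j : ZMod (2 * m),
          (single (xa j) (y (xa i) * y (a (i - j))) : MonoidAlgebra ℂ (QuaternionGroup m)) :=
        Finset.sum_congr rfl fun i _ => Fintype.sum_equiv (Equiv.addLeft i) _ _
          (fun k => by simp [sub_add_cancel_left])
      _ = ∑ j : ZMod (2 * m), ∑ i : ZMod (2 * m),
          (single (xa j) (y (xa i) * y (a (i - j))) : MonoidAlgebra ℂ (QuaternionGroup m)) :=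
        Finset.sum_comm
      _ = _ := Finset.sum_congr rfl fun j _ => (single_sum' _ _ _).symm
  rw [haa, hxx, hax, hxa]
  have hcancel : (∑ j : ZMod (2 * m),
        (single (xa j) (∑ i : ZMod (2 * m), y (xa i) * y (a (i - j))) :
          MonoidAlgebra ℂ (QuaternionGroup m))) +
      ∑ j : ZMod (2 * m), single (xa j) (∑ i : ZMod (2 * m), -(y (a i) * y (xa (j + i)))) = 0 := by
    rw [← Finset.sum_add_distrib]
    refine Finset.sum_eq_zero fun j _ => ?_
    rw [← MonoidAlgebra.single_add]
    have h2 : (∑ i : ZMod (2 * m), y (xa i) * y (a (i - j))) =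
        ∑ i : ZMod (2 * m), y (xa (j + i)) * y (a i) :=
      (Fintype.sum_equiv (Equiv.addLeft j) _ _ (fun i => by simp)).symm
    have h3 : (∑ i : ZMod (2 * m), y (xa (j + i)) * y (a i)) +
        ∑ i : ZMod (2 * m), -(y (a i) * y (xa (j + i))) = 0 := by
      rw [← Finset.sum_add_distrib]
      exact Finset.sum_eq_zero fun i _ => by ring
    rw [h2, h3, MonoidAlgebra.single_zero]
  have hmain : (∑ j : ZMod (2 * m),
        (single (a j) (∑ i : ZMod (2 * m), y (a i) * y (a (i - j))) :
          MonoidAlgebra ℂ (QuaternionGroup m))) +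
      ∑ j : ZMod (2 * m), single (a j)
        (∑ i : ZMod (2 * m), -(y (xa i) * y (xa (j + i - (m : ZMod (2 * m)))))) =
      ∑ k : ZMod (2 * m), single (a k) (A (a k)) := by
    rw [← Finset.sum_add_distrib]
    refine Finset.sum_congr rfl fun j _ => ?_
    rw [← MonoidAlgebra.single_add, hA j]
    congr 1
    rw [Finset.sum_sub_distrib]
    have h4 : (∑ i : ZMod (2 * m), y (a i) * y (a (j + i))) =
        ∑ i : ZMod (2 * m), y (a i) * y (a (i - j)) :=
      Fintype.sum_equiv (Equiv.addLeft j) _ _ (fun i => by simp [mul_comm])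
    have h5 : (∑ i : ZMod (2 * m), y (xa (-i)) * y (xa ((m : ZMod (2 * m)) - (j + i)))) =
        ∑ i : ZMod (2 * m), y (xa i) * y (xa (j + i - (m : ZMod (2 * m)))) :=
      Fintype.sum_equiv ((Equiv.addLeft j).trans (Equiv.subLeft (m : ZMod (2 * m)))) _ _
        (fun i => by
          simp only [Equiv.trans_apply, Equiv.subLeft_apply, Equiv.coe_addLeft]
          rw [show j + ((m : ZMod (2 * m)) - (j + i)) - (m : ZMod (2 * m)) = -i by ring,
            mul_comm])
    rw [h4, h5, sub_eq_add_neg, ← Finset.sum_neg_distrib]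
  linear_combination (norm := abel) hmain + hcancel

end QHelp




/-- For `G = D_m` or `Q_m`, with `α₁ = Σ_{g∈G} x_g g` and
`α₂ = Σ_{g∈⟨a⟩} χ₂(g) x_{g⁻¹} g + Σ_{g∈G∖⟨a⟩} χ₂(g) x_g g` (where `χ₂ = 1` on `⟨a⟩` and
`χ₂ = −1` off it), one has `α₁ α₂ = Σ_{h∈⟨a⟩} A_h h` in `ℂ[G]`. -/
theorem alpha1_mul_alpha2 (m : ℕ) [NeZero m]
    (x : DihedralGroup m → ℂ) (y : QuaternionGroup m → ℂ) :
    ((∑ g : DihedralGroup m,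
        (MonoidAlgebra.single g (x g) : MonoidAlgebra ℂ (DihedralGroup m))) *
      ((∑ k : ZMod m,
          MonoidAlgebra.single (DihedralGroup.r k) (x ((DihedralGroup.r k)⁻¹))) +
        ∑ k : ZMod m,
          MonoidAlgebra.single (DihedralGroup.sr k) (-(x (DihedralGroup.sr k)))) =
      ∑ k : ZMod m,
        MonoidAlgebra.single (DihedralGroup.r k) (dihedralA m x (DihedralGroup.r k))) ∧
    ((∑ g : QuaternionGroup m,
        (MonoidAlgebra.single g (y g) : MonoidAlgebra ℂ (QuaternionGroup m))) *
      ((∑ k : ZMod (2 * m),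
          MonoidAlgebra.single (QuaternionGroup.a k) (y ((QuaternionGroup.a k)⁻¹))) +
        ∑ k : ZMod (2 * m),
          MonoidAlgebra.single (QuaternionGroup.xa k) (-(y (QuaternionGroup.xa k)))) =
      ∑ k : ZMod (2 * m),
        MonoidAlgebra.single (QuaternionGroup.a k) (quaternionA m y (QuaternionGroup.a k))) := by
  constructor
  · exact dihedral_half m x (dihedralA m x)
      (fun j => by simp only [dihedralA, DihedralGroup.r_mul_r, DihedralGroup.r_mul_sr, sr_inv',
        zero_sub])
  · exact quaternion_half m y (quaternionA m y)
      (fun j => by simp only [quaternionA, QuaternionGroup.a_mul_a, QuaternionGroup.a_mul_xa,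
        xa_zero_inv, zero_sub])
end

section
/- Let G be D_m with m even, or Q_m; let χ₃, χ₄ be the remaining two degree-one characters of G (with χ₃(a) = χ₄(a) = −1 and χ₃(b) = −χ₄(b), where χ₃(b)χ₄(b) = 1 for D_m with m even and for Q_m with m even, and χ₃(b) = i, χ₄(b) = −i for Q_m with m odd). Define α₃ = Σ_{g∈G} χ₃(g) x_g g and α₄ = Σ_{g∈⟨a⟩} χ₄(g) x_{g^{-1}} g + Σ_{g∈G\⟨a⟩} χ₄(g) x_g g in C[G]. Then α₃ α₄ = Σ_{h∈⟨a⟩} χ'(h) A_h h, where χ' is the order-2 character of ⟨a⟩ (χ'(a^k) = (−1)^k) and A_h = Σ_{g∈⟨a⟩}(x_g x_{hg} − x_{gb} x_{hgb^{-1}}). -/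
/-- `α₃ = Σ_g χ₃(g) x_g g` for `D_m`, where `χ₃(a^k) = (−1)^k`, `χ₃(a^k b) = (−1)^k c₃`
with `c₃ = χ₃(b)`. -/
noncomputable def dihedralAlpha3 (m : ℕ) [NeZero m] (c₃ : ℂ) (x : DihedralGroup m → ℂ) :
    MonoidAlgebra ℂ (DihedralGroup m) :=
  (∑ k : ZMod m, MonoidAlgebra.single (DihedralGroup.r k)
      ((-1 : ℂ) ^ k.val * x (DihedralGroup.r k))) +
  ∑ k : ZMod m, MonoidAlgebra.single (DihedralGroup.r k * DihedralGroup.sr 0)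
      ((-1 : ℂ) ^ k.val * c₃ * x (DihedralGroup.r k * DihedralGroup.sr 0))

/-- `α₄ = Σ_{g∈⟨a⟩} χ₄(g) x_{g⁻¹} g + Σ_{g∉⟨a⟩} χ₄(g) x_g g` for `D_m`, where
`χ₄(a^k) = (−1)^k`, `χ₄(a^k b) = (−1)^k c₄` with `c₄ = χ₄(b)`. -/
noncomputable def dihedralAlpha4 (m : ℕ) [NeZero m] (c₄ : ℂ) (x : DihedralGroup m → ℂ) :
    MonoidAlgebra ℂ (DihedralGroup m) :=
  (∑ k : ZMod m, MonoidAlgebra.single (DihedralGroup.r k)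
      ((-1 : ℂ) ^ k.val * x ((DihedralGroup.r k)⁻¹))) +
  ∑ k : ZMod m, MonoidAlgebra.single (DihedralGroup.r k * DihedralGroup.sr 0)
      ((-1 : ℂ) ^ k.val * c₄ * x (DihedralGroup.r k * DihedralGroup.sr 0))

/-- `α₃ = Σ_g χ₃(g) x_g g` for `Q_m`, where `χ₃(a^k) = (−1)^k`, `χ₃(a^k b) = (−1)^k c₃`. -/
noncomputable def quaternionAlpha3 (m : ℕ) [NeZero m] (c₃ : ℂ) (x : QuaternionGroup m → ℂ) :
    MonoidAlgebra ℂ (QuaternionGroup m) :=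
  (∑ k : ZMod (2 * m), MonoidAlgebra.single (QuaternionGroup.a k)
      ((-1 : ℂ) ^ k.val * x (QuaternionGroup.a k))) +
  ∑ k : ZMod (2 * m), MonoidAlgebra.single (QuaternionGroup.a k * QuaternionGroup.xa 0)
      ((-1 : ℂ) ^ k.val * c₃ * x (QuaternionGroup.a k * QuaternionGroup.xa 0))

/-- `α₄ = Σ_{g∈⟨a⟩} χ₄(g) x_{g⁻¹} g + Σ_{g∉⟨a⟩} χ₄(g) x_g g` for `Q_m`, where
`χ₄(a^k) = (−1)^k`, `χ₄(a^k b) = (−1)^k c₄`. -/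
noncomputable def quaternionAlpha4 (m : ℕ) [NeZero m] (c₄ : ℂ) (x : QuaternionGroup m → ℂ) :
    MonoidAlgebra ℂ (QuaternionGroup m) :=
  (∑ k : ZMod (2 * m), MonoidAlgebra.single (QuaternionGroup.a k)
      ((-1 : ℂ) ^ k.val * x ((QuaternionGroup.a k)⁻¹))) +
  ∑ k : ZMod (2 * m), MonoidAlgebra.single (QuaternionGroup.a k * QuaternionGroup.xa 0)
      ((-1 : ℂ) ^ k.val * c₄ * x (QuaternionGroup.a k * QuaternionGroup.xa 0))

open Finset MonoidAlgebra

private lemma negOnePow_mod {n : ℕ} (hn : Even n) (a : ℕ) : ((-1:ℂ))^(a % n) = (-1)^a := by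
  conv_rhs => rw [← Nat.div_add_mod a n, pow_add, pow_mul, hn.neg_one_pow, one_pow, one_mul]

private lemma sgn_add {n : ℕ} [NeZero n] (hn : Even n) (j k : ZMod n) :
    ((-1:ℂ))^(j+k).val = (-1)^j.val * (-1)^k.val := by
  rw [ZMod.val_add, negOnePow_mod hn, pow_add]

private lemma sgn_sq (a : ℕ) : ((-1:ℂ))^a * (-1)^a = 1 := by
  rw [← pow_add]; exact Even.neg_one_pow ⟨a, rfl⟩

private lemma sgn_neg {n : ℕ} [NeZero n] (hn : Even n) (k : ZMod n) :
    ((-1:ℂ))^(-k).val = (-1)^k.val := by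
  have h := sgn_add hn (-k) k
  rw [neg_add_cancel] at h
  have h0 : ((-1:ℂ))^(0 : ZMod n).val = 1 := by rw [ZMod.val_zero, pow_zero]
  calc ((-1:ℂ))^(-k).val = (-1)^(-k).val * ((-1)^k.val * (-1)^k.val) := by rw [sgn_sq, mul_one]
    _ = ((-1:ℂ))^(0 : ZMod n).val * (-1)^k.val := by rw [← mul_assoc, ← h]
    _ = (-1)^k.val := by rw [h0, one_mul]

private lemma single_fsum {G ι : Type*} (g : G) (s : Finset ι) (f : ι → ℂ) :
    MonoidAlgebra.single g (∑ i ∈ s, f i) = ∑ i ∈ s, MonoidAlgebra.single g (f i) := by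
  classical
  induction s using Finset.induction_on with
  | empty => simp
  | insert i s hi ih => rw [Finset.sum_insert hi, Finset.sum_insert hi, MonoidAlgebra.single_add, ih]

private lemma flatP {M : Type*} [AddCommMonoid M] {n : ℕ} [NeZero n]
    (F : ZMod n → ZMod n → M) :
    ∑ j : ZMod n, ∑ k : ZMod n, F j k = ∑ p : ZMod n × ZMod n, F p.1 p.2 :=
  (Fintype.sum_prod_type (f := fun p => F p.1 p.2)).symm

open DihedralGroup

private lemma dihedral_main (m : ℕ) [NeZero m] (hm : Even m) (c₃ c₄ : ℂ)
    (h4 : c₄ = -c₃) (hp : c₃ * c₄ = -1) (x : DihedralGroup m → ℂ) :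
    dihedralAlpha3 m c₃ x * dihedralAlpha4 m c₄ x =
      ∑ k : ZMod m, MonoidAlgebra.single (r k) ((-1 : ℂ) ^ k.val * dihedralA m x (r k)) := by
  have hinv_r : ∀ i : ZMod m, (r i)⁻¹ = r (-i) := fun _ => rfl
  have hinv_sr : (sr (0:ZMod m))⁻¹ = sr 0 := rfl
  unfold dihedralAlpha3 dihedralAlpha4 dihedralA
  rw [add_mul, mul_add, mul_add, Finset.sum_mul_sum, Finset.sum_mul_sum, Finset.sum_mul_sum,
    Finset.sum_mul_sum]
  simp only [MonoidAlgebra.single_mul_single, hinv_r, hinv_sr, r_mul_r, r_mul_sr, sr_mul_r,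
    sr_mul_sr, zero_sub, mul_sub, MonoidAlgebra.single_sub, Finset.mul_sum, single_fsum,
    neg_neg, sub_neg_eq_add]
  simp only [Finset.sum_sub_distrib]
  rw [flatP, flatP, flatP, flatP, flatP, flatP]
  have h1 : (∑ p : ZMod m × ZMod m,
        MonoidAlgebra.single (r p.1) ((-1:ℂ) ^ p.1.val * (x (r p.2) * x (r (p.1 + p.2)))))
      = ∑ p : ZMod m × ZMod m,
        MonoidAlgebra.single (r (p.1 + p.2))
          ((-1:ℂ) ^ p.1.val * x (r p.1) * ((-1) ^ p.2.val * x (r (-p.2)))) := by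
    refine Fintype.sum_equiv ⟨fun p => (p.2 + p.1, -p.2), fun q => (q.1 + q.2, -q.2),
      fun p => by simp [add_assoc], fun q => by simp [add_assoc, add_comm]⟩ _ _ fun p => ?_
    obtain ⟨h, i⟩ := p
    simp only [Equiv.coe_fn_mk]
    rw [show (i + h) + -i = h from by ring, neg_neg, add_comm i h, sgn_add hm, sgn_neg hm]
    refine congrArg _ ?_
    linear_combination (-((-1:ℂ)^h.val * x (r i) * x (r (h+i)))) * sgn_sq i.val
  have h3 : (∑ p : ZMod m × ZMod m,
        MonoidAlgebra.single (sr (-p.1 + p.2))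
          ((-1:ℂ) ^ p.1.val * c₃ * x (sr (-p.1)) * ((-1) ^ p.2.val * x (r (-p.2)))))
      = ∑ p : ZMod m × ZMod m,
        -MonoidAlgebra.single (sr (-p.2 - p.1))
          ((-1:ℂ) ^ p.1.val * x (r p.1) * ((-1) ^ p.2.val * c₄ * x (sr (-p.2)))) := by
    refine Fintype.sum_equiv ⟨fun p => (-p.2, p.1), fun q => (q.2, -q.1),
      fun p => by simp, fun q => by simp⟩ _ _ fun p => ?_
    obtain ⟨a, b⟩ := p
    simp only [Equiv.coe_fn_mk]
    rw [← MonoidAlgebra.single_neg]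
    rw [show -a - -b = -a + b from by ring, sgn_neg hm b, h4]
    refine congrArg _ ?_
    ring
  have h4' : (∑ p : ZMod m × ZMod m,
        -MonoidAlgebra.single (r p.1)
          ((-1:ℂ) ^ p.1.val * (x (sr (-p.2)) * x (sr (-(p.1 + p.2))))))
      = ∑ p : ZMod m × ZMod m,
        MonoidAlgebra.single (r (-p.2 + p.1))
          ((-1:ℂ) ^ p.1.val * c₃ * x (sr (-p.1)) * ((-1) ^ p.2.val * c₄ * x (sr (-p.2)))) := by
    refine Fintype.sum_equiv ⟨fun p => (p.1 + p.2, p.2), fun q => (q.1 - q.2, q.2),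
      fun p => by simp, fun q => by simp⟩ _ _ fun p => ?_
    obtain ⟨h, i⟩ := p
    simp only [Equiv.coe_fn_mk]
    rw [← MonoidAlgebra.single_neg]
    rw [show -i + (h + i) = h from by ring, sgn_add hm]
    refine congrArg _ ?_
    linear_combination (-((-1:ℂ)^h.val * x (sr (-i)) * x (sr (-(h+i)))) * (c₃*c₄)) * sgn_sq i.val + (-((-1:ℂ)^h.val * x (sr (-i)) * x (sr (-(h+i))))) * hp
  rw [h1, sub_eq_add_neg, ← Finset.sum_neg_distrib, h4', h3, Finset.sum_neg_distrib]
  abel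

open QuaternionGroup

private lemma sgn_cast {n : ℕ} [NeZero n] (hn : Even n) (a : ℕ) :
    ((-1:ℂ))^((a : ZMod n)).val = (-1)^a := by
  rw [ZMod.val_natCast, negOnePow_mod hn]

private lemma quaternion_main (m : ℕ) [NeZero m] (c₃ c₄ : ℂ)
    (h4 : c₄ = -c₃) (hp : c₃ * c₄ = (-1:ℂ)^(m+1)) (y : QuaternionGroup m → ℂ) :
    quaternionAlpha3 m c₃ y * quaternionAlpha4 m c₄ y =
      ∑ k : ZMod (2*m), MonoidAlgebra.single (a k) ((-1 : ℂ) ^ k.val * quaternionA m y (a k)) := by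
  have : NeZero (2*m) := ⟨fun h => (NeZero.ne m) (by omega)⟩
  have hm2 : Even (2*m) := even_two_mul m
  have hinv_a : ∀ i : ZMod (2*m), (a i)⁻¹ = a (-i) := fun _ => rfl
  have hinv_xa : (xa (0 : ZMod (2*m)))⁻¹ = xa ((m : ZMod (2*m)) + 0) := rfl
  unfold quaternionAlpha3 quaternionAlpha4 quaternionA
  rw [add_mul, mul_add, mul_add, Finset.sum_mul_sum, Finset.sum_mul_sum, Finset.sum_mul_sum,
    Finset.sum_mul_sum]
  simp only [MonoidAlgebra.single_mul_single, hinv_a, hinv_xa, a_mul_a, a_mul_xa, xa_mul_a,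
    xa_mul_xa, zero_sub, add_zero, mul_sub, MonoidAlgebra.single_sub, Finset.mul_sum,
    single_fsum, neg_neg, sub_neg_eq_add]
  simp only [Finset.sum_sub_distrib]
  rw [flatP, flatP, flatP, flatP, flatP, flatP]
  have h1 : (∑ p : ZMod (2*m) × ZMod (2*m),
        MonoidAlgebra.single (a p.1) ((-1:ℂ) ^ p.1.val * (y (a p.2) * y (a (p.1 + p.2)))))
      = ∑ p : ZMod (2*m) × ZMod (2*m),
        MonoidAlgebra.single (a (p.1 + p.2))
          ((-1:ℂ) ^ p.1.val * y (a p.1) * ((-1) ^ p.2.val * y (a (-p.2)))) := by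
    refine Fintype.sum_equiv ⟨fun p => (p.2 + p.1, -p.2), fun q => (q.1 + q.2, -q.2),
      fun p => by simp [add_assoc], fun q => by simp [add_assoc, add_comm]⟩ _ _ fun p => ?_
    obtain ⟨h, i⟩ := p
    simp only [Equiv.coe_fn_mk]
    rw [show (i + h) + -i = h from by ring, neg_neg, add_comm i h, sgn_add hm2, sgn_neg hm2]
    refine congrArg _ ?_
    linear_combination (-((-1:ℂ)^h.val * y (a i) * y (a (h+i)))) * sgn_sq i.val
  have h3 : (∑ p : ZMod (2*m) × ZMod (2*m),
        MonoidAlgebra.single (xa (-p.1 + p.2))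
          ((-1:ℂ) ^ p.1.val * c₃ * y (xa (-p.1)) * ((-1) ^ p.2.val * y (a (-p.2)))))
      = ∑ p : ZMod (2*m) × ZMod (2*m),
        -MonoidAlgebra.single (xa (-p.2 - p.1))
          ((-1:ℂ) ^ p.1.val * y (a p.1) * ((-1) ^ p.2.val * c₄ * y (xa (-p.2)))) := by
    refine Fintype.sum_equiv ⟨fun p => (-p.2, p.1), fun q => (q.2, -q.1),
      fun p => by simp, fun q => by simp⟩ _ _ fun p => ?_
    obtain ⟨u, b⟩ := p
    simp only [Equiv.coe_fn_mk]
    rw [← MonoidAlgebra.single_neg]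
    rw [show -u - -b = -u + b from by ring, sgn_neg hm2 b, h4]
    refine congrArg _ ?_
    ring
  have h4' : (∑ p : ZMod (2*m) × ZMod (2*m),
        -MonoidAlgebra.single (a p.1)
          ((-1:ℂ) ^ p.1.val * (y (xa (-p.2)) * y (xa ((m : ZMod (2*m)) - (p.1 + p.2))))))
      = ∑ p : ZMod (2*m) × ZMod (2*m),
        MonoidAlgebra.single (a ((m : ZMod (2*m)) + -p.2 + p.1))
          ((-1:ℂ) ^ p.1.val * c₃ * y (xa (-p.1)) * ((-1) ^ p.2.val * c₄ * y (xa (-p.2)))) := by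
    refine Fintype.sum_equiv ⟨fun p => (p.1 + p.2 - (m : ZMod (2*m)), p.2),
      fun q => (q.1 - q.2 + (m : ZMod (2*m)), q.2),
      fun p => by obtain ⟨u,v⟩ := p; refine Prod.ext ?_ ?_ <;> simp <;> ring,
      fun q => by obtain ⟨u,v⟩ := q; refine Prod.ext ?_ ?_ <;> simp <;> ring⟩
      _ _ fun p => ?_
    obtain ⟨h, i⟩ := p
    simp only [Equiv.coe_fn_mk]
    rw [← MonoidAlgebra.single_neg]
    rw [show (m : ZMod (2*m)) + -i + (h + i - (m : ZMod (2*m))) = h from by ring]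
    rw [show -(h + i - (m : ZMod (2*m))) = (m : ZMod (2*m)) - (h+i) from by ring]
    rw [show h + i - (m : ZMod (2*m)) = h + (i + -(m : ZMod (2*m))) from by ring,
      sgn_add hm2, sgn_add hm2, sgn_neg hm2, sgn_cast hm2]
    refine congrArg _ ?_
    linear_combination
      ((-1:ℂ)^h.val * y (xa (-i)) * y (xa ((m : ZMod (2*m)) - (h+i)))) * sgn_sq i.val
      - (((-1:ℂ)^i.val * (-1)^i.val) * (-1:ℂ)^m *
          ((-1:ℂ)^h.val * y (xa (-i)) * y (xa ((m : ZMod (2*m)) - (h+i))))) * hp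
      + (((-1:ℂ)^i.val * (-1)^i.val) *
          ((-1:ℂ)^h.val * y (xa (-i)) * y (xa ((m : ZMod (2*m)) - (h+i))))) * sgn_sq m
  rw [h1, sub_eq_add_neg, ← Finset.sum_neg_distrib, h4', h3, Finset.sum_neg_distrib]
  abel

/-- For `G = D_m` (`m` even, `χ₃(b) = 1`, `χ₄(b) = −1`) or `G = Q_m` (`χ₃(b) = i`,
`χ₄(b) = −i` for `m` odd; `χ₃(b) = 1`, `χ₄(b) = −1` for `m` even):
`α₃ α₄ = Σ_{h∈⟨a⟩} χ'(h) A_h h`, where `χ'(a^k) = (−1)^k` is the order-2 character of `⟨a⟩`. -/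
theorem alpha3_mul_alpha4 (m : ℕ) [NeZero m]
    (x : DihedralGroup m → ℂ) (y : QuaternionGroup m → ℂ) :
    (Even m →
      dihedralAlpha3 m 1 x * dihedralAlpha4 m (-1) x =
        ∑ k : ZMod m, MonoidAlgebra.single (DihedralGroup.r k)
          ((-1 : ℂ) ^ k.val * dihedralA m x (DihedralGroup.r k))) ∧
    (Odd m →
      quaternionAlpha3 m Complex.I y * quaternionAlpha4 m (-Complex.I) y =
        ∑ k : ZMod (2 * m), MonoidAlgebra.single (QuaternionGroup.a k)
          ((-1 : ℂ) ^ k.val * quaternionA m y (QuaternionGroup.a k))) ∧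
    (Even m →
      quaternionAlpha3 m 1 y * quaternionAlpha4 m (-1) y =
        ∑ k : ZMod (2 * m), MonoidAlgebra.single (QuaternionGroup.a k)
          ((-1 : ℂ) ^ k.val * quaternionA m y (QuaternionGroup.a k))) := by
  refine ⟨fun hm => dihedral_main m hm 1 (-1) (by ring) (by ring) x, fun hmo => ?_, fun hme => ?_⟩
  · refine quaternion_main m Complex.I (-Complex.I) rfl ?_ y
    rw [(hmo.add_one).neg_one_pow]
    simp [mul_neg, Complex.I_mul_I]
  · refine quaternion_main m 1 (-1) (by ring) ?_ y
    rw [(hme.add_one).neg_one_pow]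
    norm_num
end

section
/- Let G be D_m or Q_m, α₁ = Σ_{g∈G} x_g g, and α₂ = Σ_{g∈⟨a⟩} x_{g^{-1}} g − Σ_{g∈G\⟨a⟩} x_g g in C[G]. Then α₁ and α₂ commute: α₁α₂ = α₂α₁. -/
open MonoidAlgebra Finset

private lemma single_rot_comm {N : ℕ} {G : Type*} [Group G] [DecidableEq G]
    (ρ : ZMod N → G) (hρρ : ∀ i j : ZMod N, ρ i * ρ j = ρ (i + j))
    (i j : ZMod N) (ci cj : ℂ) :
    Commute (MonoidAlgebra.single (ρ i) ci) (MonoidAlgebra.single (ρ j) cj) := by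
  unfold Commute SemiconjBy
  rw [MonoidAlgebra.single_mul_single, MonoidAlgebra.single_mul_single, hρρ, hρρ,
    add_comm, mul_comm]

private lemma key {N : ℕ} [NeZero N] {G : Type*} [Group G] [DecidableEq G]
    (ρ σ : ZMod N → G)
    (hρρ : ∀ i j : ZMod N, ρ i * ρ j = ρ (i + j))
    (hρσ : ∀ i j : ZMod N, ρ i * σ j = σ (j - i))
    (hσρ : ∀ i j : ZMod N, σ i * ρ j = σ (i + j))
    (c d : ZMod N → ℂ) :
    ((∑ k : ZMod N, MonoidAlgebra.single (ρ k) (c k)) +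
      (∑ k : ZMod N, MonoidAlgebra.single (σ k) (d k))) *
    ((∑ k : ZMod N, MonoidAlgebra.single (ρ k) (c (-k))) -
      (∑ k : ZMod N, MonoidAlgebra.single (σ k) (d k))) =
    ((∑ k : ZMod N, MonoidAlgebra.single (ρ k) (c (-k))) -
      (∑ k : ZMod N, MonoidAlgebra.single (σ k) (d k))) *
    ((∑ k : ZMod N, MonoidAlgebra.single (ρ k) (c k)) +
      (∑ k : ZMod N, MonoidAlgebra.single (σ k) (d k))) := by
  set A : MonoidAlgebra ℂ G := ∑ k : ZMod N, MonoidAlgebra.single (ρ k) (c k) with hA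
  set A' : MonoidAlgebra ℂ G := ∑ k : ZMod N, MonoidAlgebra.single (ρ k) (c (-k)) with hA'
  set B : MonoidAlgebra ℂ G := ∑ k : ZMod N, MonoidAlgebra.single (σ k) (d k) with hB
  have hAA' : A * A' = A' * A := by
    exact Commute.sum_left _ _ _ fun i _ =>
      Commute.sum_right _ _ _ fun j _ => single_rot_comm ρ hρρ i j (c i) (c (-j))
  have hBA' : B * A' = A * B := by
    have e1 : B * A' = ∑ i : ZMod N, ∑ j : ZMod N,
        MonoidAlgebra.single (σ (i + j)) (d i * c (-j)) := by
      rw [hB, hA', Finset.sum_mul_sum]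
      simp only [MonoidAlgebra.single_mul_single, hσρ]
    have e2 : A * B = ∑ i : ZMod N, ∑ j : ZMod N,
        MonoidAlgebra.single (σ (i + j)) (d i * c (-j)) := by
      rw [hA, hB, Finset.sum_mul_sum, Finset.sum_comm]
      refine Finset.sum_congr rfl fun i _ => ?_
      refine Fintype.sum_equiv (Equiv.neg (ZMod N)) _ _ fun j => ?_
      rw [MonoidAlgebra.single_mul_single, hρσ]
      simp only [Equiv.neg_apply, neg_neg]
      rw [sub_eq_add_neg, mul_comm]
    rw [e1, e2]
  have hBA : B * A = A' * B := by
    have e1 : B * A = ∑ i : ZMod N, ∑ j : ZMod N,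
        MonoidAlgebra.single (σ (i + j)) (d i * c j) := by
      rw [hB, hA, Finset.sum_mul_sum]
      simp only [MonoidAlgebra.single_mul_single, hσρ]
    have e2 : A' * B = ∑ i : ZMod N, ∑ j : ZMod N,
        MonoidAlgebra.single (σ (i + j)) (d i * c j) := by
      rw [hA', hB, Finset.sum_mul_sum, Finset.sum_comm]
      refine Finset.sum_congr rfl fun i _ => ?_
      refine Fintype.sum_equiv (Equiv.neg (ZMod N)) _ _ fun j => ?_
      rw [MonoidAlgebra.single_mul_single, hρσ]
      simp only [Equiv.neg_apply, neg_neg]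
      rw [sub_eq_add_neg, mul_comm]
    rw [e1, e2]
  rw [add_mul, mul_sub, mul_sub, sub_mul, mul_add, mul_add, hAA', hBA', hBA]
  abel

private def dihedralEquiv (m : ℕ) : (ZMod m ⊕ ZMod m) ≃ DihedralGroup m where
  toFun := Sum.elim DihedralGroup.r DihedralGroup.sr
  invFun g := match g with
    | DihedralGroup.r k => Sum.inl k
    | DihedralGroup.sr k => Sum.inr k
  left_inv s := by cases s <;> rfl
  right_inv g := by cases g <;> rfl

private def quaternionEquiv (m : ℕ) : (ZMod (2 * m) ⊕ ZMod (2 * m)) ≃ QuaternionGroup m where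
  toFun := Sum.elim QuaternionGroup.a QuaternionGroup.xa
  invFun g := match g with
    | QuaternionGroup.a k => Sum.inl k
    | QuaternionGroup.xa k => Sum.inr k
  left_inv s := by cases s <;> rfl
  right_inv g := by cases g <;> rfl

/-- For `G = D_m` or `Q_m`, the elements `α₁ = Σ_{g∈G} x_g g` and
`α₂ = Σ_{g∈⟨a⟩} x_{g⁻¹} g − Σ_{g∈G∖⟨a⟩} x_g g` of `ℂ[G]` commute. -/
theorem alpha1_alpha2_commute (m : ℕ) [NeZero m]
    (x : DihedralGroup m → ℂ) (y : QuaternionGroup m → ℂ) :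
    (∀ α₁ α₂ : MonoidAlgebra ℂ (DihedralGroup m),
      α₁ = (∑ g : DihedralGroup m, MonoidAlgebra.single g (x g)) →
      α₂ = (∑ k : ZMod m,
              MonoidAlgebra.single (DihedralGroup.r k) (x ((DihedralGroup.r k)⁻¹))) -
           (∑ k : ZMod m,
              MonoidAlgebra.single (DihedralGroup.sr k) (x (DihedralGroup.sr k))) →
      α₁ * α₂ = α₂ * α₁) ∧
    (∀ α₁ α₂ : MonoidAlgebra ℂ (QuaternionGroup m),
      α₁ = (∑ g : QuaternionGroup m, MonoidAlgebra.single g (y g)) →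
      α₂ = (∑ k : ZMod (2 * m),
              MonoidAlgebra.single (QuaternionGroup.a k) (y ((QuaternionGroup.a k)⁻¹))) -
           (∑ k : ZMod (2 * m),
              MonoidAlgebra.single (QuaternionGroup.xa k) (y (QuaternionGroup.xa k))) →
      α₁ * α₂ = α₂ * α₁) := by
  constructor
  · intro α₁ α₂ h1 h2
    have hinv : ∀ k : ZMod m, (DihedralGroup.r k)⁻¹ = DihedralGroup.r (-k) := fun k => rfl
    have hsplit : α₁ = (∑ k : ZMod m, MonoidAlgebra.single (DihedralGroup.r k)
          (x (DihedralGroup.r k))) +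
        (∑ k : ZMod m, MonoidAlgebra.single (DihedralGroup.sr k) (x (DihedralGroup.sr k))) := by
      rw [h1, ← (dihedralEquiv m).sum_comp (fun g => MonoidAlgebra.single g (x g)),
        Fintype.sum_sum_type]
      rfl
    rw [hsplit, h2]
    simp only [hinv]
    exact key DihedralGroup.r DihedralGroup.sr DihedralGroup.r_mul_r DihedralGroup.r_mul_sr
      DihedralGroup.sr_mul_r (fun k => x (DihedralGroup.r k)) (fun k => x (DihedralGroup.sr k))
  · intro α₁ α₂ h1 h2
    have hinv : ∀ k : ZMod (2 * m), (QuaternionGroup.a k)⁻¹ = QuaternionGroup.a (-k) :=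
      fun k => rfl
    have hsplit : α₁ = (∑ k : ZMod (2 * m), MonoidAlgebra.single (QuaternionGroup.a k)
          (y (QuaternionGroup.a k))) +
        (∑ k : ZMod (2 * m),
          MonoidAlgebra.single (QuaternionGroup.xa k) (y (QuaternionGroup.xa k))) := by
      rw [h1, ← (quaternionEquiv m).sum_comp (fun g => MonoidAlgebra.single g (y g)),
        Fintype.sum_sum_type]
      rfl
    rw [hsplit, h2]
    simp only [hinv]
    exact key QuaternionGroup.a QuaternionGroup.xa QuaternionGroup.a_mul_a QuaternionGroup.a_mul_xa
      QuaternionGroup.xa_mul_a (fun k => y (QuaternionGroup.a k)) (fun k => y (QuaternionGroup.xa k))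
end
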